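/- Let p be a prime and let G be a finite p-group whose center Z(G) has order p and coincides with the commutator subgroup [G,G] (in particular, every extraspecial p-group satisfies this). Then G is a generalized B-group: no proper central S-ring over G is primitive. -/

import Mathlib

open scoped Pointwise

/-- The sum `X̲ = ∑_{x ∈ X} x` of a subset `X` of `G`, as an element of the
integral group ring `ℤG = MonoidAlgebra ℤ G`. -/
noncomputable def clsSum {G : Type*} [Group G] [DecidableEq G] (X : Finset G) : MonoidAlgebra ℤ G :=
  ∑ x ∈ X, MonoidAlgebra.single x 1

/-- A Schur ring (S-ring) over a finite group `G`: a partition `S` of `G` into nonempty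
classes such that `{1} ∈ S`, `S` is closed under taking inverses of classes, and the
`ℤ`-span of the class sums is closed under multiplication (hence a subring of `ℤG`). -/
structure SRing (G : Type*) [Group G] [Fintype G] [DecidableEq G] where
  S : Finset (Finset G)
  nonempty_mem : ∀ X ∈ S, X.Nonempty
  cover : ∀ g : G, ∃! X : Finset G, X ∈ S ∧ g ∈ X
  one_mem : ({1} : Finset G) ∈ S
  inv_mem : ∀ X ∈ S, X⁻¹ ∈ S
  mul_closed : ∀ ξ η : MonoidAlgebra ℤ G,
    ξ ∈ Submodule.span ℤ (clsSum '' (S : Set (Finset G))) →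
    η ∈ Submodule.span ℤ (clsSum '' (S : Set (Finset G))) →
    ξ * η ∈ Submodule.span ℤ (clsSum '' (S : Set (Finset G)))

namespace SRing

variable {G : Type*} [Group G] [Fintype G] [DecidableEq G]

/-- The underlying `ℤ`-module of the S-ring `A` inside `ℤG`. -/
noncomputable def span (A : SRing G) : Submodule ℤ (MonoidAlgebra ℤ G) :=
  Submodule.span ℤ (clsSum '' (A.S : Set (Finset G)))

/-- An S-ring is central if it is contained in the center of `ℤG`. -/
def IsCentral (A : SRing G) : Prop :=
  ∀ ξ ∈ A.span, ∀ η : MonoidAlgebra ℤ G, ξ * η = η * ξ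

/-- A set `T ⊆ G` is an `A`-set if it is a union of basic sets of `A`. -/
def IsASet (A : SRing G) (T : Set G) : Prop :=
  ∀ X ∈ A.S, (∃ x ∈ X, x ∈ T) → ∀ x ∈ X, x ∈ T

/-- An S-ring is primitive if its only `A`-subgroups are trivial. -/
def IsPrimitive (A : SRing G) : Prop :=
  ∀ H : Subgroup G, A.IsASet (H : Set G) → H = ⊥ ∨ H = ⊤

end SRing

/-- The conjugacy class of `g` in `G`, as a finset. -/
def conjClass {G : Type*} [Group G] [Fintype G] [DecidableEq G] (g : G) : Finset G :=
  Finset.univ.filter (fun h => ∃ c : G, c * g * c⁻¹ = h)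

/-- The partition of `G` into conjugacy classes; it is the basic-set partition of the
full center `Z(ℤG)` viewed as an S-ring. -/
def classPartition (G : Type*) [Group G] [Fintype G] [DecidableEq G] : Finset (Finset G) :=
  Finset.univ.image (fun g : G => conjClass g)

/-- The basic-set partition `{{e}, G \ {e}}` of the trivial S-ring over `G`. -/
def trivialPartition (G : Type*) [Group G] [Fintype G] [DecidableEq G] : Finset (Finset G) :=
  {({1} : Finset G), Finset.univ \ {1}}

/-- A central S-ring is proper if it lies strictly between `Z(ℤG)` and the trivial
S-ring, i.e. its partition is neither the conjugacy class partition nor the trivial one. -/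
def SRing.IsProper {G : Type*} [Group G] [Fintype G] [DecidableEq G] (A : SRing G) : Prop :=
  A.IsCentral ∧ A.S ≠ classPartition G ∧ A.S ≠ trivialPartition G

/-- `G` is a generalized B-group if no proper central S-ring over `G` is primitive. -/
def IsGeneralizedBGroup (G : Type*) [Group G] [Fintype G] [DecidableEq G] : Prop :=
  ∀ A : SRing G, A.IsProper → ¬ A.IsPrimitive

namespace SRing

set_option linter.unusedSectionVars false

variable {G : Type*} [Group G] [Fintype G] [DecidableEq G] (A : SRing G)

-- ===================== auxiliary lemmas =====================

variable (A : SRing G)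

instance : CoeFun (MonoidAlgebra ℤ G) (fun _ => G → ℤ) := ⟨fun x => x.coeff⟩

lemma basic_unique {X Y : Finset G} (hX : X ∈ A.S) (hY : Y ∈ A.S) {x : G}
    (hx : x ∈ X) (hy : x ∈ Y) : X = Y := by
  obtain ⟨W, _, hU⟩ := A.cover x
  rw [hU X ⟨hX, hx⟩, hU Y ⟨hY, hy⟩]

lemma eq_singleton_of_one_mem {X : Finset G} (hX : X ∈ A.S) (h1 : (1:G) ∈ X) :
    X = {1} :=
  A.basic_unique hX A.one_mem h1 (Finset.mem_singleton_self 1)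

lemma clsSum_apply' (W : Finset G) (g : G) :
    clsSum W g = if g ∈ W then (1:ℤ) else 0 := by
  rw [clsSum, MonoidAlgebra.coeff_sum, Finset.sum_apply']
  simp only [MonoidAlgebra.coeff_single, Finsupp.single_apply]
  rw [Finset.sum_ite_eq']

lemma clsSum_mul_apply (X Y : Finset G) (h : G) :
    (clsSum X * clsSum Y) h = ∑ x ∈ X, (if x⁻¹ * h ∈ Y then (1:ℤ) else 0) := by
  rw [clsSum, clsSum, Finset.sum_mul_sum, MonoidAlgebra.coeff_sum, Finset.sum_apply']
  refine Finset.sum_congr rfl fun x _ => ?_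
  rw [MonoidAlgebra.coeff_sum, Finset.sum_apply']
  simp only [MonoidAlgebra.single_mul_single, one_mul, MonoidAlgebra.coeff_single, Finsupp.single_apply]
  have : ∀ y ∈ Y, (if x * y = h then (1:ℤ) else 0) = if y = x⁻¹ * h then 1 else 0 :=
    fun y _ => if_congr (eq_inv_mul_iff_mul_eq (b := x) (a := y) (c := h)).symm rfl rfl
  rw [Finset.sum_congr rfl this, Finset.sum_ite_eq']

lemma clsSum_mul_apply_nonneg (X Y : Finset G) (h : G) :
    0 ≤ (clsSum X * clsSum Y) h := by
  rw [clsSum_mul_apply]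
  exact Finset.sum_nonneg fun x _ => by split <;> norm_num

lemma exists_of_ne_zero {X Y : Finset G} {h : G}
    (hne : (clsSum X * clsSum Y) h ≠ 0) : ∃ x ∈ X, x⁻¹ * h ∈ Y := by
  by_contra hcon
  push_neg at hcon
  apply hne
  rw [clsSum_mul_apply]
  exact Finset.sum_eq_zero fun x hx => if_neg (hcon x hx)

lemma clsSum_mem_span {X : Finset G} (hX : X ∈ A.S) : clsSum X ∈ A.span :=
  Submodule.subset_span ⟨X, hX, rfl⟩

lemma mul_clsSum_mem_span {X Y : Finset G} (hX : X ∈ A.S) (hY : Y ∈ A.S) :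
    clsSum X * clsSum Y ∈ A.span :=
  A.mul_closed _ _ (A.clsSum_mem_span hX) (A.clsSum_mem_span hY)

lemma apply_const_of_mem_span {ξ : MonoidAlgebra ℤ G} (hξ : ξ ∈ A.span)
    {X : Finset G} (hX : X ∈ A.S) {x y : G} (hx : x ∈ X) (hy : y ∈ X) :
    ξ x = ξ y := by
  induction hξ using Submodule.span_induction with
  | mem ζ hζ =>
    obtain ⟨W, hW, rfl⟩ := hζ
    rw [clsSum_apply', clsSum_apply']
    by_cases hxW : x ∈ W
    · have hXW : X = W := A.basic_unique hX hW hx hxW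
      rw [if_pos hxW, if_pos (hXW ▸ hy)]
    · have hyW : y ∉ W := fun hyW => hxW ((A.basic_unique hX hW hy hyW) ▸ hx)
      rw [if_neg hxW, if_neg hyW]
  | zero => rfl
  | add a b _ _ ha hb => rw [MonoidAlgebra.coeff_add, Finsupp.add_apply, Finsupp.add_apply, ha, hb]
  | smul r a _ ha => rw [MonoidAlgebra.coeff_smul, Finsupp.smul_apply, Finsupp.smul_apply, ha]

lemma clsSum_mul_single_apply (X : Finset G) (c h : G) :
    (clsSum X * MonoidAlgebra.single c (1:ℤ)) h = if h * c⁻¹ ∈ X then 1 else 0 := by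
  rw [clsSum, Finset.sum_mul, MonoidAlgebra.coeff_sum, Finset.sum_apply']
  simp only [MonoidAlgebra.single_mul_single, one_mul, MonoidAlgebra.coeff_single, Finsupp.single_apply]
  have : ∀ x ∈ X, (if x * c = h then (1:ℤ) else 0) = if x = h * c⁻¹ then 1 else 0 :=
    fun x _ => if_congr (eq_mul_inv_iff_mul_eq (a := x) (b := h) (c := c)).symm rfl rfl
  rw [Finset.sum_congr rfl this, Finset.sum_ite_eq']

lemma single_mul_clsSum_apply (X : Finset G) (c h : G) :
    (MonoidAlgebra.single c (1:ℤ) * clsSum X) h = if c⁻¹ * h ∈ X then 1 else 0 := by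
  rw [clsSum, Finset.mul_sum, MonoidAlgebra.coeff_sum, Finset.sum_apply']
  simp only [MonoidAlgebra.single_mul_single, one_mul, MonoidAlgebra.coeff_single, Finsupp.single_apply]
  have : ∀ x ∈ X, (if c * x = h then (1:ℤ) else 0) = if x = c⁻¹ * h then 1 else 0 :=
    fun x _ => if_congr (eq_inv_mul_iff_mul_eq (a := x) (b := c) (c := h)).symm rfl rfl
  rw [Finset.sum_congr rfl this, Finset.sum_ite_eq']

lemma conj_mem (hc : A.IsCentral) {X : Finset G} (hX : X ∈ A.S) {x : G} (hx : x ∈ X)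
    (c : G) : c * x * c⁻¹ ∈ X := by
  have h := hc (clsSum X) (A.clsSum_mem_span hX) (MonoidAlgebra.single c 1)
  have h2 := congrArg (fun ξ : MonoidAlgebra ℤ G => ξ (c * x)) h
  change (clsSum X * MonoidAlgebra.single c (1:ℤ)) (c * x) = (MonoidAlgebra.single c (1:ℤ) * clsSum X) (c * x) at h2
  rw [clsSum_mul_single_apply, single_mul_clsSum_apply] at h2
  rw [show c⁻¹ * (c * x) = x by group, if_pos hx] at h2
  by_contra hmem
  rw [if_neg hmem] at h2
  norm_num at h2

end SRing

open scoped commutatorElement in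
/-- In a group whose center has prime order `p` and equals the commutator subgroup,
every noncentral element is conjugate to each of its central translates. -/

theorem conj_to_mul_center' {G : Type*} [Group G] [Fintype G] {p : ℕ} (hp : p.Prime)
    (hcenter : Nat.card (Subgroup.center G) = p)
    (hcomm : Subgroup.center G = commutator G)
    {g : G} (hg : g ∉ Subgroup.center G) {z : G} (hz : z ∈ Subgroup.center G) :
    ∃ c : G, c * g * c⁻¹ = z * g := by
  classical
  have hval : ∀ a b : G, a * b * a⁻¹ * b⁻¹ ∈ Subgroup.center G := by
    intro a b
    have h1 : ⁅a, b⁆ ∈ commutator G := by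
      rw [commutator_def]
      exact Subgroup.commutator_mem_commutator (Subgroup.mem_top a) (Subgroup.mem_top b)
    rw [← hcomm] at h1
    rwa [commutatorElement_def] at h1
  let H : Subgroup G :=
  { carrier := Set.range fun c => c * g * c⁻¹ * g⁻¹
    one_mem' := ⟨1, by group⟩
    mul_mem' := by
      rintro _ _ ⟨c, rfl⟩ ⟨d, rfl⟩
      refine ⟨d * c, ?_⟩
      have hcen := Subgroup.mem_center_iff.mp (hval c g)
      calc (d*c)*g*(d*c)⁻¹*g⁻¹ = d * (c*g*c⁻¹*g⁻¹) * (g*d⁻¹*g⁻¹) := by group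
        _ = (c*g*c⁻¹*g⁻¹) * d * (g*d⁻¹*g⁻¹) := by rw [hcen d]
        _ = (c*g*c⁻¹*g⁻¹) * (d*g*d⁻¹*g⁻¹) := by group
    inv_mem' := by
      rintro _ ⟨c, rfl⟩
      refine ⟨c⁻¹, ?_⟩
      have hcen := Subgroup.mem_center_iff.mp (hval g c)
      have h1 : (c*g*c⁻¹*g⁻¹)⁻¹ = g*c*g⁻¹*c⁻¹ := by group
      rw [h1]
      calc c⁻¹*g*(c⁻¹)⁻¹*g⁻¹ = c⁻¹ * ((g*c*g⁻¹*c⁻¹) * c) := by group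
        _ = c⁻¹ * (c * (g*c*g⁻¹*c⁻¹)) := by rw [← hcen c]
        _ = g*c*g⁻¹*c⁻¹ := by group
  }
  have hHle : H ≤ Subgroup.center G := by rintro _ ⟨c, rfl⟩; exact hval c g
  have hHne : H ≠ ⊥ := by
    intro hbot
    apply hg
    rw [Subgroup.mem_center_iff]
    intro c
    have h1 : c*g*c⁻¹*g⁻¹ = 1 := (Subgroup.eq_bot_iff_forall H).mp hbot _ ⟨c, rfl⟩
    rw [mul_inv_eq_one] at h1
    rw [mul_inv_eq_iff_eq_mul] at h1
    exact h1
  have hcard : Nat.card H = p := by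
    have hdvd : Nat.card H ∣ p := hcenter ▸ Subgroup.card_dvd_of_le hHle
    rcases (Nat.Prime.eq_one_or_self_of_dvd hp _ hdvd) with h1 | h1
    · exact absurd (Subgroup.card_eq_one.mp h1) hHne
    · exact h1
  have hHZ : H = Subgroup.center G := by
    apply SetLike.coe_injective
    apply Set.eq_of_subset_of_ncard_le (fun x hx => hHle hx)
    · rw [← Nat.card_coe_set_eq, ← Nat.card_coe_set_eq]
      have e1 : Nat.card ((H : Set G) : Type _) = Nat.card H := rfl
      have e2 : Nat.card (((Subgroup.center G : Subgroup G) : Set G) : Type _)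
          = Nat.card (Subgroup.center G) := rfl
      rw [e1, e2, hcard, hcenter]

  rw [← hHZ] at hz
  obtain ⟨c, hc⟩ := hz
  refine ⟨c, ?_⟩
  rw [← hc]
  group


/-- **Extraspecial-like `p`-groups are generalized B-groups** (cf. Corollary 1.5).
Let `p` be a prime and `G` a finite `p`-group whose center has order `p` and coincides
with the commutator subgroup (e.g. any extraspecial `p`-group). Then `G` is a
generalized B-group: no proper central S-ring over `G` is primitive. -/
theorem extraspecial_isGeneralizedBGroup {G : Type*} [Group G] [Fintype G] [DecidableEq G]
    (p : ℕ) (hp : p.Prime) (hpG : IsPGroup p G)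
    (hcenter : Nat.card (Subgroup.center G) = p)
    (hcomm : Subgroup.center G = commutator G) :
    IsGeneralizedBGroup G := by
  classical
  intro A hA hprim
  obtain ⟨hc, -, htriv⟩ := hA
  -- center facts
  have hZne : ∃ z : G, z ∈ Subgroup.center G ∧ z ≠ 1 := by
    by_contra hcon
    push_neg at hcon
    have hbot : Subgroup.center G = ⊥ := (Subgroup.eq_bot_iff_forall _).mpr hcon
    rw [hbot, Subgroup.card_bot] at hcenter
    have := hp.one_lt; omega
  have hgnc : ∃ g : G, g ∉ Subgroup.center G := by
    by_contra hall
    push_neg at hall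
    have hcb : commutator G = ⊥ := by
      rw [commutator_def, eq_bot_iff]
      rw [Subgroup.commutator_le]
      intro a _ b _
      have : a * b = b * a := (Subgroup.mem_center_iff.mp (hall b) a)
      rw [commutatorElement_eq_one_iff_mul_comm.mpr this]
      exact Subgroup.one_mem ⊥
    rw [← hcomm] at hcb
    rw [hcb, Subgroup.card_bot] at hcenter
    have := hp.one_lt; omega
  -- translation of noncentral elements of basic sets by central elements
  have hcoset : ∀ X ∈ A.S, ∀ x ∈ X, x ∉ Subgroup.center G →
      ∀ z ∈ Subgroup.center G, z * x ∈ X := by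
    intro X hX x hx hxZ z hz
    obtain ⟨cc, hcc⟩ := conj_to_mul_center' hp hcenter hcomm hxZ hz
    rw [← hcc]
    exact A.conj_mem hc hX hx cc
  -- Phase 1 : the subgroup of elements whose basic set lies inside the center
  have honeP : ∀ X ∈ A.S, (1:G) ∈ X → ∀ x ∈ X, x ∈ Subgroup.center G := by
    intro X hX h1 x hx
    have := A.eq_singleton_of_one_mem hX h1
    subst this
    rw [Finset.mem_singleton] at hx
    rw [hx]; exact Subgroup.one_mem _
  let D : Subgroup G :=
  { carrier := {g : G | ∀ X ∈ A.S, g ∈ X → ∀ x ∈ X, x ∈ Subgroup.center G}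
    one_mem' := honeP
    mul_mem' := by
      intro a b ha hb
      intro W hW habW x hxW
      obtain ⟨Xa, ⟨hXaS, haXa⟩, -⟩ := A.cover a
      obtain ⟨Xb, ⟨hXbS, hbXb⟩, -⟩ := A.cover b
      have hspan := A.mul_clsSum_mem_span hXaS hXbS
      have hval : (clsSum Xa * clsSum Xb) (a*b) ≠ 0 := by
        rw [SRing.clsSum_mul_apply]
        have hnn : ∀ x ∈ Xa, (0:ℤ) ≤ if x⁻¹ * (a*b) ∈ Xb then (1:ℤ) else 0 := by
          intro x _; split <;> norm_num
        have h0 : (if a⁻¹ * (a*b) ∈ Xb then (1:ℤ) else 0)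
            ≤ ∑ x ∈ Xa, (if x⁻¹ * (a*b) ∈ Xb then (1:ℤ) else 0) :=
          Finset.single_le_sum hnn haXa
        rw [show a⁻¹ * (a*b) = b by group, if_pos hbXb] at h0
        omega
      have hval2 : (clsSum Xa * clsSum Xb) x ≠ 0 := by
        rwa [A.apply_const_of_mem_span hspan hW hxW habW]
      obtain ⟨u, huXa, hub⟩ := SRing.exists_of_ne_zero hval2
      have hu : u ∈ Subgroup.center G := ha Xa hXaS haXa u huXa
      have hub : u⁻¹ * x ∈ Subgroup.center G := hb Xb hXbS hbXb _ hub
      have : x = u * (u⁻¹ * x) := by group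
      rw [this]
      exact Subgroup.mul_mem _ hu hub
    inv_mem' := by
      intro g hg W hW hgW x hxW
      have hWinv : W⁻¹ ∈ A.S := A.inv_mem W hW
      have hgWinv : g ∈ W⁻¹ := by rw [Finset.mem_inv']; simpa using hgW
      have := hg W⁻¹ hWinv hgWinv x⁻¹ (Finset.inv_mem_inv hxW)
      rwa [← Subgroup.inv_mem_iff] }
  have hDset : A.IsASet (D : Set G) := by
    intro X hX hex x hxX
    obtain ⟨x0, hx0X, hx0D⟩ := hex
    intro W hW hxW x' hx'W
    have hWX : W = X := A.basic_unique hW hX hxW hxX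
    exact hx0D X hX hx0X x' (hWX ▸ hx'W)
  have hDbot : D = ⊥ := by
    rcases hprim D hDset with h | h
    · exact h
    · exfalso
      obtain ⟨g, hg⟩ := hgnc
      have hgD : g ∈ D := h ▸ Subgroup.mem_top g
      obtain ⟨Xg, ⟨hXgS, hgXg⟩, -⟩ := A.cover g
      exact hg (hgD Xg hXgS hgXg g hgXg)
  have hC1 : ∀ X ∈ A.S, X ≠ ({1} : Finset G) → ∃ g ∈ X, g ∉ Subgroup.center G := by
    intro X hX hXne
    by_contra hcon
    push_neg at hcon
    apply hXne
    obtain ⟨x0, hx0⟩ := A.nonempty_mem X hX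
    have hall : ∀ x ∈ X, x = 1 := by
      intro x hx
      have hxD : x ∈ D := by
        intro W hW hxW x' hx'W
        have := A.basic_unique hW hX hxW hx
        exact hcon x' (this ▸ hx'W)
      rw [hDbot] at hxD
      exact hxD
    rw [Finset.eq_singleton_iff_unique_mem]
    exact ⟨(hall x0 hx0) ▸ hx0, hall⟩
  -- Phase 2 : every nonidentity basic set meets the center
  have hC2 : ∀ X ∈ A.S, X ≠ ({1} : Finset G) → ∃ z ∈ X, z ∈ Subgroup.center G := by
    intro X hX hXne
    by_contra hcon
    push_neg at hcon
    have hKpow : ∀ h : G, (∀ x ∈ X, h * x ∈ X) → ∀ n : ℕ, ∀ x ∈ X, h^n * x ∈ X := by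
      intro h hh n
      induction n with
      | zero => intro x hx; simpa using hx
      | succ n ih =>
        intro x hx
        rw [pow_succ', mul_assoc]
        exact hh _ (ih x hx)
    let K : Subgroup G :=
    { carrier := {h : G | ∀ x ∈ X, h * x ∈ X}
      one_mem' := by intro x hx; simpa using hx
      mul_mem' := by intro a b ha hb x hx; rw [mul_assoc]; exact ha _ (hb x hx)
      inv_mem' := by
        intro h hh
        have hord : h ^ (orderOf h) = 1 := pow_orderOf_eq_one h
        have hpos : 0 < orderOf h := orderOf_pos h
        have hinv : h⁻¹ = h ^ (orderOf h - 1) := by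
          apply inv_eq_of_mul_eq_one_right
          rw [← pow_succ']
          rw [show orderOf h - 1 + 1 = orderOf h by omega]
          exact hord
        show ∀ x ∈ X, h⁻¹ * x ∈ X
        rw [hinv]
        exact hKpow h hh _ }
    have hXinvS : X⁻¹ ∈ A.S := A.inv_mem X hX
    have hcval : ∀ h : G,
        (clsSum X * clsSum X⁻¹) h = ((X.filter (fun x => h⁻¹ * x ∈ X)).card : ℤ) := by
      intro h
      rw [SRing.clsSum_mul_apply, ← Finset.sum_boole]
      refine Finset.sum_congr rfl fun x _ => ?_
      refine if_congr ?_ rfl rfl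
      rw [Finset.mem_inv', mul_inv_rev, inv_inv]
    have hKchar : ∀ h : G, (clsSum X * clsSum X⁻¹) h = (X.card : ℤ) ↔ h ∈ K := by
      intro h
      rw [hcval]
      constructor
      · intro hcard
        have hsub : X.filter (fun x => h⁻¹ * x ∈ X) ⊆ X := Finset.filter_subset _ _
        have hcard' : (X.filter (fun x => h⁻¹ * x ∈ X)).card = X.card := by exact_mod_cast hcard
        have heq := Finset.eq_of_subset_of_card_le hsub (le_of_eq hcard'.symm)
        have hmem : ∀ x ∈ X, h⁻¹ * x ∈ X := by
          intro x hx
          have hx' : x ∈ X.filter (fun x => h⁻¹ * x ∈ X) := by rw [heq]; exact hx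
          exact (Finset.mem_filter.mp hx').2
        have : h⁻¹ ∈ K := hmem
        simpa using K.inv_mem this
      · intro hK
        have hKi : h⁻¹ ∈ K := K.inv_mem hK
        have : X.filter (fun x => h⁻¹ * x ∈ X) = X :=
          Finset.filter_true_of_mem fun x hx => hKi x hx
        rw [this]
    have hKset : A.IsASet (K : Set G) := by
      intro W hW hex w hwW
      obtain ⟨w0, hw0W, hw0K⟩ := hex
      have hsp := A.mul_clsSum_mem_span hX hXinvS
      have heq := A.apply_const_of_mem_span hsp hW hwW hw0W
      exact (hKchar w).mp (heq.trans ((hKchar w0).mpr hw0K))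
    obtain ⟨z, hzZ, hz1⟩ := hZne
    have hzK : z ∈ K := by
      intro x hx
      exact hcoset X hX x hx (hcon x hx) z hzZ
    have hKbot : K ≠ ⊥ := by
      intro hb
      exact hz1 ((Subgroup.eq_bot_iff_forall K).mp hb z hzK)
    have hKtop : K = ⊤ := (hprim K hKset).resolve_left hKbot
    obtain ⟨x0, hx0⟩ := A.nonempty_mem X hX
    have hx0i : x0⁻¹ ∈ K := hKtop ▸ Subgroup.mem_top x0⁻¹
    have h1X : (1:G) ∈ X := by
      have := hx0i x0 hx0
      rwa [inv_mul_cancel] at this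
    exact hcon 1 h1X (Subgroup.one_mem _)
  -- Phase 3 : find two suitable non-identity basic sets
  obtain ⟨z1, hz1Z, hz11⟩ := hZne
  have hex2 : ∃ Xa ∈ A.S, ∃ Xb ∈ A.S,
      Xa ≠ ({1} : Finset G) ∧ Xb ≠ ({1} : Finset G) ∧ Xa ≠ Xb := by
    by_contra hcon
    push_neg at hcon
    apply htriv
    obtain ⟨X0, ⟨hX0S, hzX0⟩, -⟩ := A.cover z1
    have hX0ne : X0 ≠ ({1} : Finset G) := by
      intro h; rw [h, Finset.mem_singleton] at hzX0; exact hz11 hzX0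
    have huniv : X0 = Finset.univ \ {1} := by
      apply Finset.ext
      intro g
      rw [Finset.mem_sdiff, Finset.mem_singleton]
      constructor
      · intro hg
        refine ⟨Finset.mem_univ g, ?_⟩
        intro h1
        exact hX0ne (A.eq_singleton_of_one_mem hX0S (h1 ▸ hg))
      · rintro ⟨-, hg1⟩
        obtain ⟨Xg, ⟨hXgS, hgXg⟩, -⟩ := A.cover g
        have hXgne : Xg ≠ ({1} : Finset G) := by
          intro h; rw [h, Finset.mem_singleton] at hgXg; exact hg1 hgXg
        have := hcon Xg hXgS X0 hX0S hXgne hX0ne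
        rwa [← this]
    apply Finset.ext
    intro W
    simp only [trivialPartition, Finset.mem_insert, Finset.mem_singleton]
    constructor
    · intro hW
      by_cases hW1 : W = ({1} : Finset G)
      · exact Or.inl hW1
      · right
        rw [← huniv]
        exact hcon W hW X0 hX0S hW1 hX0ne
    · rintro (h | h)
      · rw [h]; exact A.one_mem
      · rw [h, ← huniv]; exact hX0S
  obtain ⟨Xa, hXaS, Xb, hXbS, hXa1, hXb1, hab⟩ := hex2
  obtain ⟨X, hXS, Y, hYS, hX1, hY1, hXYinv⟩ :
      ∃ X ∈ A.S, ∃ Y ∈ A.S,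
        X ≠ ({1} : Finset G) ∧ Y ≠ ({1} : Finset G) ∧ X ≠ Y⁻¹ := by
    by_cases h : Xa = Xb⁻¹
    · refine ⟨Xa, hXaS, Xa, hXaS, hXa1, hXa1, ?_⟩
      intro he
      rw [h, inv_inv] at he
      exact hab (h.trans he)
    · exact ⟨Xa, hXaS, Xb, hXbS, hXa1, hXb1, h⟩
  -- Phase 4 : counting contradiction
  obtain ⟨nX, hnXX, hnXZ⟩ := hC1 X hXS hX1
  obtain ⟨nY, hnYY, hnYZ⟩ := hC1 Y hYS hY1
  obtain ⟨zX, hzXX, hzXZ⟩ := hC2 X hXS hX1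
  obtain ⟨zY, hzYY, hzYZ⟩ := hC2 Y hYS hY1
  have hXZpos : 0 < (X.filter (fun x => x ∈ Subgroup.center G)).card :=
    Finset.card_pos.mpr ⟨zX, Finset.mem_filter.mpr ⟨hzXX, hzXZ⟩⟩
  have hYZpos : 0 < (Y.filter (fun x => x ∈ Subgroup.center G)).card :=
    Finset.card_pos.mpr ⟨zY, Finset.mem_filter.mpr ⟨hzYY, hzYZ⟩⟩
  have hspanXY := A.mul_clsSum_mem_span hXS hYS
  have hnonneg : ∀ h : G, 0 ≤ (clsSum X * clsSum Y) h := SRing.clsSum_mul_apply_nonneg X Y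
  -- (A) total central mass
  have hPA : ∑ w ∈ Finset.univ.filter (fun g : G => g ∈ Subgroup.center G),
      (clsSum X * clsSum Y) w
      = ((X.filter (fun x => x ∈ Subgroup.center G)).card : ℤ)
        * ((Y.filter (fun x => x ∈ Subgroup.center G)).card : ℤ) := by
    have hswap : ∑ w ∈ Finset.univ.filter (fun g : G => g ∈ Subgroup.center G),
        (clsSum X * clsSum Y) w
        = ∑ x ∈ X, ∑ w ∈ Finset.univ.filter (fun g : G => g ∈ Subgroup.center G),
            (if x⁻¹ * w ∈ Y then (1:ℤ) else 0) := by
      simp only [SRing.clsSum_mul_apply]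
      rw [Finset.sum_comm]
    rw [hswap, ← Finset.sum_filter_add_sum_filter_not X (fun x => x ∈ Subgroup.center G)]
    have hnc : ∑ x ∈ X.filter (fun x => x ∉ Subgroup.center G),
        ∑ w ∈ Finset.univ.filter (fun g : G => g ∈ Subgroup.center G),
          (if x⁻¹ * w ∈ Y then (1:ℤ) else 0) = 0 := by
      apply Finset.sum_eq_zero
      intro x hx
      rw [Finset.mem_filter] at hx
      apply Finset.sum_eq_zero
      intro w hw
      rw [Finset.mem_filter] at hw
      rw [if_neg]
      intro hmem
      have hyZ : x⁻¹ * w ∉ Subgroup.center G := by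
        intro hzz
        apply hx.2
        have hxe : x = w * (x⁻¹ * w)⁻¹ := by group
        rw [hxe]
        exact Subgroup.mul_mem _ hw.2 (Subgroup.inv_mem _ hzz)
      have hYinvS : Y⁻¹ ∈ A.S := A.inv_mem Y hYS
      have hmem2 : (x⁻¹ * w)⁻¹ ∈ Y⁻¹ := Finset.inv_mem_inv hmem
      have hmem2Z : (x⁻¹ * w)⁻¹ ∉ Subgroup.center G := by
        intro hzz; exact hyZ ((Subgroup.inv_mem_iff _).mp hzz)
      have hx' := hcoset Y⁻¹ hYinvS _ hmem2 hmem2Z w hw.2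
      rw [show w * (x⁻¹ * w)⁻¹ = x by group] at hx'
      exact hXYinv (A.basic_unique hXS hYinvS hx.1 hx')
    rw [hnc, add_zero]
    have hcc : ∀ x ∈ X.filter (fun x => x ∈ Subgroup.center G),
        ∑ w ∈ Finset.univ.filter (fun g : G => g ∈ Subgroup.center G),
          (if x⁻¹ * w ∈ Y then (1:ℤ) else 0)
        = ((Y.filter (fun x => x ∈ Subgroup.center G)).card : ℤ) := by
      intro x hx
      rw [Finset.mem_filter] at hx
      rw [Finset.sum_boole]
      have hbij : ((Finset.univ.filter (fun g : G => g ∈ Subgroup.center G)).filter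
            (fun w => x⁻¹ * w ∈ Y)).card
          = (Y.filter (fun x => x ∈ Subgroup.center G)).card := by
        apply Finset.card_bij (fun w _ => x⁻¹ * w)
        · intro w hw
          rw [Finset.mem_filter, Finset.mem_filter] at hw
          rw [Finset.mem_filter]
          exact ⟨hw.2, Subgroup.mul_mem _ (Subgroup.inv_mem _ hx.2) hw.1.2⟩
        · intro w1 _ w2 _ he
          exact mul_left_cancel he
        · intro y hy
          rw [Finset.mem_filter] at hy
          refine ⟨x * y, ?_, by group⟩
          rw [Finset.mem_filter, Finset.mem_filter]
          refine ⟨⟨Finset.mem_univ _, Subgroup.mul_mem _ hx.2 hy.2⟩, ?_⟩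
          rw [show x⁻¹ * (x * y) = y by group]
          exact hy.1
      exact_mod_cast hbij
    rw [Finset.sum_congr rfl hcc, Finset.sum_const, nsmul_eq_mul]
  -- (B) pointwise lower bounds
  have hb1 : ∀ w ∈ X, ((Y.filter (fun x => x ∈ Subgroup.center G)).card : ℤ)
      ≤ (clsSum X * clsSum Y) w := by
    intro w hw
    rw [A.apply_const_of_mem_span hspanXY hXS hw hnXX, SRing.clsSum_mul_apply]
    have hsub : (Y.filter (fun x => x ∈ Subgroup.center G)).image (fun y => nX * y⁻¹) ⊆ X := by
      intro u hu
      rw [Finset.mem_image] at hu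
      obtain ⟨y, hy, rfl⟩ := hu
      rw [Finset.mem_filter] at hy
      have h1 := hcoset X hXS nX hnXX hnXZ y⁻¹ (Subgroup.inv_mem _ hy.2)
      rwa [show y⁻¹ * nX = nX * y⁻¹ from
        (Subgroup.mem_center_iff.mp (Subgroup.inv_mem _ hy.2) nX).symm] at h1
    calc ((Y.filter (fun x => x ∈ Subgroup.center G)).card : ℤ)
        = ∑ u ∈ (Y.filter (fun x => x ∈ Subgroup.center G)).image (fun y => nX * y⁻¹),
            (if u⁻¹ * nX ∈ Y then (1:ℤ) else 0) := by
          rw [Finset.sum_image (by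
            intro a _ b _ he
            exact inv_injective (mul_left_cancel he))]
          have hone : ∀ y ∈ Y.filter (fun x => x ∈ Subgroup.center G),
              (if (nX * y⁻¹)⁻¹ * nX ∈ Y then (1:ℤ) else 0) = 1 := by
            intro y hy
            rw [Finset.mem_filter] at hy
            rw [show (nX * y⁻¹)⁻¹ * nX = y by group, if_pos hy.1]
          rw [Finset.sum_congr rfl hone, Finset.sum_const, nsmul_eq_mul, mul_one]
      _ ≤ ∑ x ∈ X, (if x⁻¹ * nX ∈ Y then (1:ℤ) else 0) :=
          Finset.sum_le_sum_of_subset_of_nonneg hsub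
            (fun x _ _ => by split <;> norm_num)
  have hb2 : ∀ w ∈ Y, ((X.filter (fun x => x ∈ Subgroup.center G)).card : ℤ)
      ≤ (clsSum X * clsSum Y) w := by
    intro w hw
    rw [A.apply_const_of_mem_span hspanXY hYS hw hnYY, SRing.clsSum_mul_apply]
    have hone : ∀ x ∈ X.filter (fun x => x ∈ Subgroup.center G),
        (if x⁻¹ * nY ∈ Y then (1:ℤ) else 0) = 1 := by
      intro x hx
      rw [Finset.mem_filter] at hx
      rw [if_pos (hcoset Y hYS nY hnYY hnYZ x⁻¹ (Subgroup.inv_mem _ hx.2))]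
    calc ((X.filter (fun x => x ∈ Subgroup.center G)).card : ℤ)
        = ∑ x ∈ X.filter (fun x => x ∈ Subgroup.center G),
            (if x⁻¹ * nY ∈ Y then (1:ℤ) else 0) := by
          rw [Finset.sum_congr rfl hone, Finset.sum_const, nsmul_eq_mul, mul_one]
      _ ≤ ∑ x ∈ X, (if x⁻¹ * nY ∈ Y then (1:ℤ) else 0) :=
          Finset.sum_le_sum_of_subset_of_nonneg (Finset.filter_subset _ _)
            (fun x _ _ => by split <;> norm_num)
  -- final contradiction
  by_cases hXY : X = Y
  · -- diagonal case : we get the stronger bound 2·sX on X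
    subst hXY
    set sX : ℤ := ((X.filter (fun x => x ∈ Subgroup.center G)).card : ℤ) with hsXdef
    have hsX1 : 1 ≤ sX := by rw [hsXdef]; exact_mod_cast hXZpos
    -- stronger pointwise bound on the class of nX
    have hstrong : 2 * sX ≤ (clsSum X * clsSum X) nX := by
      rw [SRing.clsSum_mul_apply]
      set F := (X.filter (fun x => x ∈ Subgroup.center G)).image (fun y => nX * y⁻¹) with hFdef
      have hFsub : F ⊆ X := by
        intro u hu
        rw [hFdef, Finset.mem_image] at hu
        obtain ⟨y, hy, rfl⟩ := hu
        rw [Finset.mem_filter] at hy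
        have h1 := hcoset X hXS nX hnXX hnXZ y⁻¹ (Subgroup.inv_mem _ hy.2)
        rwa [show y⁻¹ * nX = nX * y⁻¹ from
          (Subgroup.mem_center_iff.mp (Subgroup.inv_mem _ hy.2) nX).symm] at h1
      have hdisj : Disjoint F (X.filter (fun x => x ∈ Subgroup.center G)) := by
        rw [Finset.disjoint_left]
        intro u hu1 hu2
        rw [hFdef, Finset.mem_image] at hu1
        obtain ⟨y, hy, rfl⟩ := hu1
        rw [Finset.mem_filter] at hy hu2
        apply hnXZ
        rw [show nX = (nX * y⁻¹) * y by group]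
        exact Subgroup.mul_mem _ hu2.2 hy.2
      have hUsub : F ∪ X.filter (fun x => x ∈ Subgroup.center G) ⊆ X :=
        Finset.union_subset hFsub (Finset.filter_subset _ _)
      have hone : ∀ u ∈ F ∪ X.filter (fun x => x ∈ Subgroup.center G),
          (if u⁻¹ * nX ∈ X then (1:ℤ) else 0) = 1 := by
        intro u hu
        rcases Finset.mem_union.mp hu with hu | hu
        · rw [hFdef, Finset.mem_image] at hu
          obtain ⟨y, hy, rfl⟩ := hu
          rw [Finset.mem_filter] at hy
          rw [show (nX * y⁻¹)⁻¹ * nX = y by group, if_pos hy.1]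
        · rw [Finset.mem_filter] at hu
          rw [if_pos (hcoset X hXS nX hnXX hnXZ u⁻¹ (Subgroup.inv_mem _ hu.2))]
      have hcardF : F.card = (X.filter (fun x => x ∈ Subgroup.center G)).card := by
        rw [hFdef]
        apply Finset.card_image_of_injOn
        intro a _ b _ he
        exact inv_injective (mul_left_cancel he)
      calc 2 * sX
          = ∑ u ∈ F ∪ X.filter (fun x => x ∈ Subgroup.center G),
              (if u⁻¹ * nX ∈ X then (1:ℤ) else 0) := by
            rw [Finset.sum_congr rfl hone, Finset.sum_const, nsmul_eq_mul, mul_one,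
              Finset.card_union_of_disjoint hdisj, hcardF, hsXdef]
            push_cast
            ring
        _ ≤ ∑ x ∈ X, (if x⁻¹ * nX ∈ X then (1:ℤ) else 0) :=
            Finset.sum_le_sum_of_subset_of_nonneg hUsub
              (fun x _ _ => by split <;> norm_num)
    -- now sum over the central part of X
    have hXZsubZf : X.filter (fun x => x ∈ Subgroup.center G)
        ⊆ Finset.univ.filter (fun g : G => g ∈ Subgroup.center G) := by
      intro u hu
      rw [Finset.mem_filter] at hu ⊢
      exact ⟨Finset.mem_univ _, hu.2⟩
    have hlow : sX * (2 * sX)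
        ≤ ∑ w ∈ Finset.univ.filter (fun g : G => g ∈ Subgroup.center G),
            (clsSum X * clsSum X) w := by
      calc sX * (2 * sX)
          = ∑ _w ∈ X.filter (fun x => x ∈ Subgroup.center G), (2 * sX) := by
            rw [Finset.sum_const, nsmul_eq_mul, hsXdef]
        _ ≤ ∑ w ∈ X.filter (fun x => x ∈ Subgroup.center G), (clsSum X * clsSum X) w := by
            apply Finset.sum_le_sum
            intro w hw
            rw [Finset.mem_filter] at hw
            calc (2 : ℤ) * sX ≤ (clsSum X * clsSum X) nX := hstrong
              _ = (clsSum X * clsSum X) w :=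
                  A.apply_const_of_mem_span hspanXY hXS hnXX hw.1
        _ ≤ ∑ w ∈ Finset.univ.filter (fun g : G => g ∈ Subgroup.center G),
              (clsSum X * clsSum X) w :=
            Finset.sum_le_sum_of_subset_of_nonneg hXZsubZf (fun w _ _ => hnonneg w)
    rw [hPA] at hlow
    nlinarith [hsX1]
  · -- off-diagonal case
    set sX : ℤ := ((X.filter (fun x => x ∈ Subgroup.center G)).card : ℤ) with hsXdef
    set sY : ℤ := ((Y.filter (fun x => x ∈ Subgroup.center G)).card : ℤ) with hsYdef
    have hsX1 : 1 ≤ sX := by rw [hsXdef]; exact_mod_cast hXZpos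
    have hsY1 : 1 ≤ sY := by rw [hsYdef]; exact_mod_cast hYZpos
    have hdXY : Disjoint X Y := by
      rw [Finset.disjoint_left]
      intro u huX huY
      exact hXY (A.basic_unique hXS hYS huX huY)
    have hdisj : Disjoint (X.filter (fun x => x ∈ Subgroup.center G))
        (Y.filter (fun x => x ∈ Subgroup.center G)) :=
      Finset.disjoint_filter_filter hdXY
    have hUsub : X.filter (fun x => x ∈ Subgroup.center G)
          ∪ Y.filter (fun x => x ∈ Subgroup.center G)
        ⊆ Finset.univ.filter (fun g : G => g ∈ Subgroup.center G) := by
      intro u hu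
      rcases Finset.mem_union.mp hu with hu | hu <;>
        · rw [Finset.mem_filter] at hu ⊢
          exact ⟨Finset.mem_univ _, hu.2⟩
    have hlow : sX * sY + sY * sX
        ≤ ∑ w ∈ Finset.univ.filter (fun g : G => g ∈ Subgroup.center G),
            (clsSum X * clsSum Y) w := by
      have h1 : sX * sY ≤ ∑ w ∈ X.filter (fun x => x ∈ Subgroup.center G),
          (clsSum X * clsSum Y) w := by
        calc sX * sY = ∑ _w ∈ X.filter (fun x => x ∈ Subgroup.center G), sY := by
              rw [Finset.sum_const, nsmul_eq_mul, hsXdef]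
          _ ≤ _ := Finset.sum_le_sum fun w hw =>
              hb1 w (Finset.filter_subset _ _ hw)
      have h2 : sY * sX ≤ ∑ w ∈ Y.filter (fun x => x ∈ Subgroup.center G),
          (clsSum X * clsSum Y) w := by
        calc sY * sX = ∑ _w ∈ Y.filter (fun x => x ∈ Subgroup.center G), sX := by
              rw [Finset.sum_const, nsmul_eq_mul, hsYdef]
          _ ≤ _ := Finset.sum_le_sum fun w hw =>
              hb2 w (Finset.filter_subset _ _ hw)
      calc sX * sY + sY * sX
          ≤ ∑ w ∈ X.filter (fun x => x ∈ Subgroup.center G)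
              ∪ Y.filter (fun x => x ∈ Subgroup.center G), (clsSum X * clsSum Y) w := by
            rw [Finset.sum_union hdisj]
            exact add_le_add h1 h2
        _ ≤ _ := Finset.sum_le_sum_of_subset_of_nonneg hUsub (fun w _ _ => hnonneg w)
    rw [hPA] at hlow
    nlinarith [hsX1, hsY1]
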